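/- Let σ satisfy σ(u)² ≤ c_0 exp(c_1 u²/2) with c_1 < 1. With x^{(q)} uniform and independent on spheres S^{d_q-1}(√d_q) for q = 1,...,Q, fixed unit vectors w^{(q)}, and coefficients α_q = τ^{(q)} r_q/R where α_1 → 1 and α_q → 0 for q ≥ 2 as d → ∞ uniformly over τ in a small box around 1: there exist ε_0 > 0 and d_0 such that sup_{d ≥ d_0} sup_{τ ∈ [1-ε_0, 1+ε_0]^Q} E[σ(Σ_q α_q ⟨w^{(q)}, x^{(q)}⟩)²] < ∞. -/

import Mathlib

open MeasureTheory

/-- Normalizing constant of the one-coordinate law on `S^{n-1}(√n)`. -/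
noncomputable def projConst (n : ℕ) : ℝ :=
  Real.Gamma ((n : ℝ) - 1) /
    ((2 : ℝ) ^ ((n : ℝ) - 2) * Real.sqrt n * (Real.Gamma (((n : ℝ) - 1) / 2)) ^ 2)

/-- Density of the one-coordinate law on `S^{n-1}(√n)`. -/
noncomputable def projDensity (n : ℕ) (t : ℝ) : ℝ :=
  if t ^ 2 ≤ (n : ℝ) then projConst n * (1 - t ^ 2 / (n : ℝ)) ^ (((n : ℝ) - 3) / 2) else 0

/-- The law of one coordinate of a uniform point on `S^{n-1}(√n)`. -/
noncomputable def projMeasure (n : ℕ) : Measure ℝ :=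
  MeasureTheory.volume.withDensity (fun t => ENNReal.ofReal (projDensity n t))

lemma Gamma_add_half_le {x : ℝ} (hx : 0 < x) :
    Real.Gamma (x + 1/2) ≤ Real.sqrt x * Real.Gamma x := by
  have h1 : Real.Gamma (x + 1/2) ^ 2 ≤ Real.Gamma x * Real.Gamma (x + 1) := by
    have hcv := Real.convexOn_log_Gamma
    have hmem : x ∈ Set.Ioi (0:ℝ) := hx
    have hmem1 : x + 1 ∈ Set.Ioi (0:ℝ) := Set.mem_Ioi.mpr (by linarith)
    have := hcv.2 hmem hmem1 (by norm_num : (0:ℝ) ≤ 1/2) (by norm_num : (0:ℝ) ≤ 1/2)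
      (by norm_num)
    simp only [Function.comp_apply, smul_eq_mul] at this
    rw [show (1/2 : ℝ) * x + (1/2 : ℝ) * (x+1) = x + 1/2 by ring] at this
    have hG : 0 < Real.Gamma (x + 1/2) := Real.Gamma_pos_of_pos (by linarith)
    have hGx : 0 < Real.Gamma x := Real.Gamma_pos_of_pos hx
    have hGx1 : 0 < Real.Gamma (x+1) := Real.Gamma_pos_of_pos (by linarith)
    have h2 : Real.log (Real.Gamma (x+1/2) ^ 2) ≤ Real.log (Real.Gamma x * Real.Gamma (x+1)) := by
      rw [Real.log_pow, Real.log_mul hGx.ne' hGx1.ne']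
      push_cast
      linarith
    exact (Real.log_le_log_iff (by positivity) (by positivity)).mp h2
  rw [Real.Gamma_add_one hx.ne'] at h1
  have hGx : 0 < Real.Gamma x := Real.Gamma_pos_of_pos hx
  have h2 : Real.Gamma (x + 1/2) ^ 2 ≤ (Real.sqrt x * Real.Gamma x) ^ 2 := by
    rw [mul_pow, Real.sq_sqrt hx.le]; nlinarith
  have hb : (0:ℝ) ≤ Real.sqrt x * Real.Gamma x := by positivity
  have hG : 0 < Real.Gamma (x + 1/2) := Real.Gamma_pos_of_pos (by linarith)
  nlinarith [h2, hG, hb]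

lemma projConst_le_one {n : ℕ} (hn : 2 ≤ n) : projConst n ≤ 1 := by
  have hn2 : (2:ℝ) ≤ (n:ℝ) := by exact_mod_cast hn
  set x := ((n:ℝ)-1)/2 with hxdef
  have hx : 0 < x := by rw [hxdef]; linarith
  have hGx : 0 < Real.Gamma x := Real.Gamma_pos_of_pos hx
  have hGxh : 0 < Real.Gamma (x+1/2) := Real.Gamma_pos_of_pos (by linarith)
  have h2p : (0:ℝ) < (2:ℝ)^((n:ℝ)-2) := Real.rpow_pos_of_pos two_pos _
  have hπ : (0:ℝ) < Real.sqrt Real.pi := Real.sqrt_pos.mpr Real.pi_pos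
  have hsn : (0:ℝ) < Real.sqrt n := Real.sqrt_pos.mpr (by linarith)
  have hdup := Real.Gamma_mul_Gamma_add_half x
  rw [show 2*x = (n:ℝ)-1 by rw [hxdef]; ring,
      show 1-((n:ℝ)-1) = -((n:ℝ)-2) by ring,
      Real.rpow_neg (by norm_num : (0:ℝ) ≤ 2)] at hdup
  have key : Real.Gamma ((n:ℝ)-1)
      = Real.Gamma x * Real.Gamma (x+1/2) * (2:ℝ)^((n:ℝ)-2) / Real.sqrt Real.pi := by
    rw [hdup]; field_simp
  rw [projConst, show (((n:ℝ)-1)/2) = x from hxdef.symm, key]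
  rw [div_le_one (by positivity), div_le_iff₀ hπ]
  have hhalf : Real.Gamma (x+1/2) ≤ Real.sqrt x * Real.Gamma x := Gamma_add_half_le hx
  have hxn : Real.sqrt x ≤ Real.sqrt (n:ℝ) := Real.sqrt_le_sqrt (by rw [hxdef]; linarith)
  have h1π : (1:ℝ) ≤ Real.sqrt Real.pi := by
    rw [show (1:ℝ) = Real.sqrt 1 by simp]
    exact Real.sqrt_le_sqrt (by linarith [Real.pi_gt_three])
  have h2 : Real.Gamma (x+1/2) ≤ Real.sqrt n * Real.Gamma x := by
    refine le_trans hhalf ?_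
    have := Real.sqrt_nonneg x
    nlinarith
  have A : Real.Gamma x * Real.Gamma (x+1/2) ≤ Real.sqrt n * Real.Gamma x ^ 2 := by
    nlinarith [h2, hGx.le]
  have B : (0:ℝ) ≤ Real.sqrt (n:ℝ) * Real.Gamma x ^ 2 * (2:ℝ)^((n:ℝ)-2) := by positivity
  nlinarith [mul_le_mul_of_nonneg_right A h2p.le, B, h1π]

lemma projConst_nonneg {n : ℕ} (hn : 2 ≤ n) : 0 ≤ projConst n := by
  have hn2 : (2:ℝ) ≤ (n:ℝ) := by exact_mod_cast hn
  have h1 : 0 < Real.Gamma ((n:ℝ)-1) := Real.Gamma_pos_of_pos (by linarith)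
  have h2 : 0 < Real.Gamma (((n:ℝ)-1)/2) := Real.Gamma_pos_of_pos (by linarith)
  have h3 : (0:ℝ) < (2:ℝ)^((n:ℝ)-2) := Real.rpow_pos_of_pos two_pos _
  have hsn : (0:ℝ) < Real.sqrt n := Real.sqrt_pos.mpr (by linarith)
  unfold projConst
  positivity

lemma projDensity_nonneg {n : ℕ} (hn : 2 ≤ n) (t : ℝ) : 0 ≤ projDensity n t := by
  unfold projDensity
  split_ifs with h
  · have hn0 : (0:ℝ) < (n:ℝ) := by positivity
    have hs : (0:ℝ) ≤ 1 - t^2/(n:ℝ) := by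
      rw [sub_nonneg]; exact (div_le_one hn0).mpr h
    exact mul_nonneg (projConst_nonneg hn) (Real.rpow_nonneg hs _)
  · exact le_refl 0

lemma projDensity_measurable (n : ℕ) : Measurable (projDensity n) := by
  unfold projDensity
  apply Measurable.ite
  · exact measurableSet_le (by fun_prop) measurable_const
  · fun_prop
  · exact measurable_const

lemma lintegral_exp_projMeasure {n : ℕ} {lam : ℝ} (hl0 : 0 ≤ lam)
    (hn : 4 ≤ n) (hn6 : 6 ≤ (n:ℝ) * (1 - lam)) :
    ∫⁻ t, ENNReal.ofReal (Real.exp (lam * t^2 / 2)) ∂projMeasure n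
      ≤ ENNReal.ofReal (Real.sqrt (Real.pi / ((1-lam)/4))) := by
  have hn2 : 2 ≤ n := by omega
  have hn0 : (0:ℝ) < (n:ℝ) := by
    have : (4:ℝ) ≤ (n:ℝ) := by exact_mod_cast hn
    linarith
  set a := (1-lam)/4 with ha
  have hapos : 0 < a := by
    have : (0:ℝ) < (n:ℝ) * (1-lam) := lt_of_lt_of_le (by norm_num) hn6
    have h1l : 0 < 1 - lam := by
      by_contra hcon; push_neg at hcon; nlinarith
    rw [ha]; linarith
  have h1l : 0 < 1 - lam := by linarith [hapos]
  have hmg : Measurable fun t : ℝ => ENNReal.ofReal (Real.exp (lam * t^2 / 2)) := by fun_prop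
  have hmd : Measurable fun t : ℝ => ENNReal.ofReal (projDensity n t) :=
    (projDensity_measurable n).ennreal_ofReal
  rw [projMeasure, lintegral_withDensity_eq_lintegral_mul _ hmd hmg]
  have hpt : ∀ t : ℝ, ENNReal.ofReal (projDensity n t) * ENNReal.ofReal (Real.exp (lam*t^2/2))
      ≤ ENNReal.ofReal (Real.exp (-a * t^2)) := by
    intro t
    rw [← ENNReal.ofReal_mul (projDensity_nonneg hn2 t)]
    apply ENNReal.ofReal_le_ofReal
    unfold projDensity
    split_ifs with h
    · have hs : (0:ℝ) ≤ 1 - t^2/(n:ℝ) := by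
        rw [sub_nonneg]; exact (div_le_one hn0).mpr h
      have hp : (0:ℝ) ≤ ((n:ℝ)-3)/2 := by
        have : (4:ℝ) ≤ (n:ℝ) := by exact_mod_cast hn
        linarith
      have h1 : (1 - t^2/(n:ℝ)) ^ (((n:ℝ)-3)/2)
          ≤ Real.exp (-(t^2/(n:ℝ))) ^ (((n:ℝ)-3)/2) :=
        Real.rpow_le_rpow hs (by linarith [Real.add_one_le_exp (-(t^2/(n:ℝ)))]) hp
      have h2 : Real.exp (-(t^2/(n:ℝ))) ^ (((n:ℝ)-3)/2)
          = Real.exp (-(t^2/(n:ℝ)) * (((n:ℝ)-3)/2)) := (Real.exp_mul _ _).symm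
      have hb1 : projConst n * (1 - t^2/(n:ℝ)) ^ (((n:ℝ)-3)/2)
          ≤ Real.exp (-(t^2/(n:ℝ)) * (((n:ℝ)-3)/2)) := by
        rw [← h2]
        calc projConst n * (1 - t^2/(n:ℝ)) ^ (((n:ℝ)-3)/2)
            ≤ 1 * (Real.exp (-(t^2/(n:ℝ))) ^ (((n:ℝ)-3)/2)) := by
              apply mul_le_mul (projConst_le_one hn2) h1 (Real.rpow_nonneg hs _) one_pos.le
          _ = Real.exp (-(t^2/(n:ℝ))) ^ (((n:ℝ)-3)/2) := one_mul _
      calc projConst n * (1 - t^2/(n:ℝ)) ^ (((n:ℝ)-3)/2) * Real.exp (lam*t^2/2)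
          ≤ Real.exp (-(t^2/(n:ℝ)) * (((n:ℝ)-3)/2)) * Real.exp (lam*t^2/2) :=
            mul_le_mul_of_nonneg_right hb1 (Real.exp_pos _).le
        _ = Real.exp (-(t^2/(n:ℝ)) * (((n:ℝ)-3)/2) + lam*t^2/2) := (Real.exp_add _ _).symm
        _ ≤ Real.exp (-a * t^2) := by
            apply Real.exp_le_exp.mpr
            rw [ha]
            have ht2 : (0:ℝ) ≤ t^2 := sq_nonneg t
            have hne : (n:ℝ) ≠ 0 := hn0.ne'
            have e1 : -(t^2/(n:ℝ)) * (((n:ℝ)-3)/2) + lam*t^2/2 + ((1-lam)/4)*t^2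
                = t^2 * (6 - (n:ℝ)*(1-lam)) / (4*(n:ℝ)) := by
              field_simp; ring
            have key : t^2 * (6 - (n:ℝ)*(1-lam)) / (4*(n:ℝ)) ≤ 0 :=
              div_nonpos_of_nonpos_of_nonneg
                (mul_nonpos_of_nonneg_of_nonpos ht2 (by linarith)) (by positivity)
            rw [← e1] at key
            linarith
    · rw [zero_mul]; exact (Real.exp_pos _).le
  calc ∫⁻ t, (fun t => ENNReal.ofReal (projDensity n t)) t
          * (fun t : ℝ => ENNReal.ofReal (Real.exp (lam * t^2 / 2))) t
      ≤ ∫⁻ t, ENNReal.ofReal (Real.exp (-a * t^2)) := lintegral_mono hpt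
    _ = ENNReal.ofReal (∫ t, Real.exp (-a * t^2)) :=
        (MeasureTheory.ofReal_integral_eq_lintegral_ofReal
          (integrable_exp_neg_mul_sq hapos)
          (Filter.Eventually.of_forall fun t => (Real.exp_pos _).le)).symm
    _ = ENNReal.ofReal (Real.sqrt (Real.pi / a)) := by rw [integral_gaussian]

open Finset in
lemma lmarginal_prod_aux {Q : ℕ} (μ : Fin Q → Measure ℝ) [∀ i, SigmaFinite (μ i)]
    (g : Fin Q → ℝ → ENNReal) (hg : ∀ i, Measurable (g i)) (s : Finset (Fin Q)) :
    ∀ x : Fin Q → ℝ,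
      (∫⋯∫⁻_s, (fun y => ∏ i, g i (y i)) ∂μ) x
        = (∏ i ∈ s, ∫⁻ t, g i t ∂μ i) * ∏ i ∈ sᶜ, g i (x i) := by
  have hf : Measurable fun y : Fin Q → ℝ => ∏ i, g i (y i) :=
    Finset.measurable_prod _ fun i _ => (hg i).comp (measurable_pi_apply i)
  induction s using Finset.induction_on with
  | empty =>
      intro x
      rw [MeasureTheory.lmarginal_empty]
      simp only [Finset.prod_empty, one_mul, Finset.compl_empty]
  | @insert j s' hj ih =>
      intro x
      rw [MeasureTheory.lmarginal_insert _ hf hj]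
      simp_rw [ih]
      have hjc : j ∈ s'ᶜ := Finset.mem_compl.mpr hj
      have step : ∀ t : ℝ, ∏ i ∈ s'ᶜ, g i (Function.update x j t i)
          = g j t * ∏ i ∈ s'ᶜ.erase j, g i (x i) := by
        intro t
        rw [← Finset.mul_prod_erase _ _ hjc, Function.update_self]
        congr 1
        apply Finset.prod_congr rfl
        intro i hi
        rw [Function.update_of_ne (Finset.ne_of_mem_erase hi)]
      simp_rw [step]
      rw [lintegral_const_mul _ ((hg j).mul_const _),
          lintegral_mul_const _ (hg j),
          Finset.prod_insert hj, Finset.compl_insert]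
      ring

lemma lintegral_pi_prod {Q : ℕ} (μ : Fin Q → Measure ℝ) [∀ i, SigmaFinite (μ i)]
    (g : Fin Q → ℝ → ENNReal) (hg : ∀ i, Measurable (g i)) :
    ∫⁻ x : Fin Q → ℝ, ∏ i, g i (x i) ∂Measure.pi μ = ∏ i, ∫⁻ t, g i t ∂μ i := by
  rw [MeasureTheory.lintegral_eq_lmarginal_univ (fun _ => (0:ℝ)),
    lmarginal_prod_aux μ g hg Finset.univ]
  simp

instance projMeasure.sigmaFinite (n : ℕ) : SigmaFinite (projMeasure n) := by
  unfold projMeasure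
  infer_instance

/-- Uniform second-moment bound: let `σ(u)² ≤ c₀exp(c₁u²/2)` with `c₁ < 1`. With
independent projections `x^{(q)} ~ projMeasure(d_q)` where `d_q = ⌈d^{η_q}⌉`, and
coefficients `α_q = τ_q·d^{(η_q+κ_q)/2}/√(Σ_{q'} d^{η_{q'}+κ_{q'}})` (so `α_{q₀} → 1`
for the unique maximizer `q₀` of `η+κ` and `α_q → 0` otherwise), there exist `ε₀ > 0`
and `d₀` such that `sup_{d ≥ d₀} sup_{τ ∈ [1-ε₀,1+ε₀]^Q} E[σ(Σ_q α_q x^{(q)})²] < ∞`. -/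
theorem uniform_second_moment_bound
    (Qc : ℕ) (q0 : Fin Qc)
    (η κ : Fin Qc → ℝ) (hη : ∀ q, 0 < η q) (hκ : ∀ q, 0 ≤ κ q)
    (hmax : ∀ q, q ≠ q0 → η q + κ q < η q0 + κ q0)
    (σ : ℝ → ℝ) (hmeas : Measurable σ)
    (c0 c1 : ℝ) (hc0 : 0 < c0) (hc1 : c1 < 1)
    (hgrow : ∀ u : ℝ, σ u ^ 2 ≤ c0 * Real.exp (c1 * u ^ 2 / 2)) :
    ∃ ε0 : ℝ, 0 < ε0 ∧ ∃ d0 : ℕ, ∃ M : ℝ,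
      ∀ d : ℕ, d0 ≤ d →
        ∀ τ : Fin Qc → ℝ, (∀ q, |τ q - 1| ≤ ε0) →
          ∫ x : Fin Qc → ℝ,
              σ (∑ q, (τ q * (d : ℝ) ^ ((η q + κ q) / 2) /
                    Real.sqrt (∑ q', (d : ℝ) ^ (η q' + κ q'))) * x q) ^ 2
            ∂(Measure.pi fun q => projMeasure ⌈(d : ℝ) ^ (η q)⌉₊) ≤ M := by
  -- effective growth constants
  set c := max c1 0 with hcdef
  have hcnn : 0 ≤ c := le_max_right _ _
  have hclt : c < 1 := max_lt hc1 one_pos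
  have hgrow' : ∀ u : ℝ, σ u ^ 2 ≤ c0 * Real.exp (c * u ^ 2 / 2) := by
    intro u
    refine (hgrow u).trans (mul_le_mul_of_nonneg_left (Real.exp_le_exp.mpr ?_) hc0.le)
    have h1 := sq_nonneg u
    have h2 : c1 ≤ c := le_max_left _ _
    nlinarith
  set lam := (1 + c)/2 with hlam
  have hlam0 : 0 ≤ lam := by rw [hlam]; linarith
  have hlam1 : lam < 1 := by rw [hlam]; linarith
  have hclam : c < lam := by rw [hlam]; linarith
  -- choice of ε0
  refine ⟨min 1 ((lam - c)/3), lt_min one_pos (by linarith), ?_⟩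
  set ε0 := min 1 ((lam - c)/3) with hε0
  have hε0le1 : ε0 ≤ 1 := min_le_left _ _
  have hε0le : ε0 ≤ (lam - c)/3 := min_le_right _ _
  have hε0pos : 0 < ε0 := by rw [hε0]; exact lt_min one_pos (by linarith)
  have hA : c * (1 + ε0)^2 ≤ lam := by
    nlinarith [mul_nonneg (sub_nonneg.mpr hclt.le) hε0pos.le,
      mul_nonneg (sub_nonneg.mpr hclt.le) (sq_nonneg ε0),
      mul_nonneg hε0pos.le (sub_nonneg.mpr hε0le1), hε0le]
  -- choice of d0
  set N : ℕ := max 4 ⌈6/(1-lam)⌉₊ with hN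
  have hN4 : 4 ≤ N := le_max_left _ _
  have hN6 : 6 ≤ (N:ℝ) * (1 - lam) := by
    have h1 : ((⌈6/(1-lam)⌉₊ : ℕ) : ℝ) ≤ (N:ℝ) := by
      exact_mod_cast le_max_right 4 ⌈6/(1-lam)⌉₊
    have h2 : 6/(1-lam) ≤ ((⌈6/(1-lam)⌉₊ : ℕ) : ℝ) := Nat.le_ceil _
    have h3 : 6/(1-lam) ≤ (N:ℝ) := le_trans h2 h1
    rw [div_le_iff₀ (by linarith)] at h3
    linarith
  have hDex : ∀ q : Fin Qc, ∃ D : ℕ, ∀ d : ℕ, D ≤ d → (N:ℝ) ≤ (d:ℝ)^(η q) := by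
    intro q
    have ht : Filter.Tendsto (fun d : ℕ => (d:ℝ)^(η q)) Filter.atTop Filter.atTop :=
      (tendsto_rpow_atTop (hη q)).comp tendsto_natCast_atTop_atTop
    exact Filter.eventually_atTop.mp (ht.eventually_ge_atTop (N:ℝ))
  choose D hD using hDex
  refine ⟨max 1 (Finset.univ.sup D), ?_⟩
  -- the uniform bound
  set K := Real.sqrt (Real.pi / ((1-lam)/4)) with hK
  have hK0 : 0 ≤ K := Real.sqrt_nonneg _
  refine ⟨c0 * K ^ Qc, ?_⟩
  intro d hd τ hτ
  have hd1 : 1 ≤ d := le_trans (le_max_left _ _) hd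
  have hdR : (1:ℝ) ≤ (d:ℝ) := by exact_mod_cast hd1
  have hdpos : (0:ℝ) < (d:ℝ) := by linarith
  -- properties of the dimensions n q
  have hnq : ∀ q : Fin Qc, (N:ℝ) ≤ ((⌈(d:ℝ)^(η q)⌉₊ : ℕ):ℝ) := by
    intro q
    have h1 : D q ≤ d :=
      le_trans (le_trans (Finset.le_sup (Finset.mem_univ q)) (le_max_right 1 _)) hd
    exact le_trans (hD q d h1) (Nat.le_ceil _)
  have hn4 : ∀ q : Fin Qc, 4 ≤ ⌈(d:ℝ)^(η q)⌉₊ := by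
    intro q
    have := hnq q
    have h4 : (4:ℝ) ≤ ((⌈(d:ℝ)^(η q)⌉₊ : ℕ):ℝ) := le_trans (by exact_mod_cast hN4) this
    exact_mod_cast h4
  have hn6 : ∀ q : Fin Qc, 6 ≤ ((⌈(d:ℝ)^(η q)⌉₊ : ℕ):ℝ) * (1 - lam) := by
    intro q
    refine le_trans hN6 (mul_le_mul_of_nonneg_right (hnq q) (by linarith))
  -- the coefficient bound
  set S := ∑ q', (d:ℝ)^(η q' + κ q') with hS
  have hSpos : 0 < S := by
    rw [hS]
    exact Finset.sum_pos (fun q _ => Real.rpow_pos_of_pos hdpos _) ⟨q0, Finset.mem_univ q0⟩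
  have hβsq : ∀ q : Fin Qc, (τ q * (d:ℝ)^((η q + κ q)/2) / Real.sqrt S)^2
      = (τ q)^2 * (d:ℝ)^(η q + κ q) / S := by
    intro q
    rw [div_pow, mul_pow, Real.sq_sqrt hSpos.le]
    congr 2
    rw [← Real.rpow_natCast ((d:ℝ)^((η q + κ q)/2)) 2, ← Real.rpow_mul hdpos.le]
    norm_num
  have hβsum : (∑ q, (τ q * (d:ℝ)^((η q + κ q)/2) / Real.sqrt S)^2) ≤ (1 + ε0)^2 := by
    simp_rw [hβsq]
    rw [← Finset.sum_div, div_le_iff₀ hSpos]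
    have : ∑ q, (τ q)^2 * (d:ℝ)^(η q + κ q) ≤ ∑ q, (1+ε0)^2 * (d:ℝ)^(η q + κ q) := by
      apply Finset.sum_le_sum
      intro q _
      apply mul_le_mul_of_nonneg_right _ (Real.rpow_pos_of_pos hdpos _).le
      have := hτ q
      have h1 : |τ q| ≤ 1 + ε0 := by
        rw [abs_le] at this ⊢
        constructor <;> linarith [this.1, this.2]
      nlinarith [abs_nonneg (τ q), sq_abs (τ q), h1]
    rw [← Finset.mul_sum] at this
    rw [hS]
    linarith
  -- pointwise bound
  have hptreal : ∀ x : Fin Qc → ℝ,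
      σ (∑ q, (τ q * (d:ℝ)^((η q + κ q)/2) / Real.sqrt S) * x q) ^ 2
        ≤ c0 * ∏ q, Real.exp (lam * (x q)^2 / 2) := by
    intro x
    have hCS := Finset.sum_mul_sq_le_sq_mul_sq Finset.univ
      (fun q => τ q * (d:ℝ)^((η q + κ q)/2) / Real.sqrt S) x
    have hXnn : (0:ℝ) ≤ ∑ q, (x q)^2 :=
      Finset.sum_nonneg fun q _ => sq_nonneg _
    have harg : c * (∑ q, (τ q * (d:ℝ)^((η q + κ q)/2) / Real.sqrt S) * x q)^2 / 2
        ≤ lam * (∑ q, (x q)^2) / 2 := by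
      have h1 : c * (∑ q, (τ q * (d:ℝ)^((η q + κ q)/2) / Real.sqrt S) * x q)^2
          ≤ c * (((1+ε0)^2) * ∑ q, (x q)^2) := by
        apply mul_le_mul_of_nonneg_left _ hcnn
        exact le_trans hCS (mul_le_mul_of_nonneg_right hβsum hXnn)
      have h2 : c * (((1+ε0)^2) * ∑ q, (x q)^2) ≤ lam * ∑ q, (x q)^2 := by
        rw [← mul_assoc]
        exact mul_le_mul_of_nonneg_right hA hXnn
      linarith
    calc σ (∑ q, (τ q * (d:ℝ)^((η q + κ q)/2) / Real.sqrt S) * x q) ^ 2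
        ≤ c0 * Real.exp (c * (∑ q, (τ q * (d:ℝ)^((η q + κ q)/2) / Real.sqrt S) * x q)^2 / 2) :=
          hgrow' _
      _ ≤ c0 * Real.exp (lam * (∑ q, (x q)^2) / 2) :=
          mul_le_mul_of_nonneg_left (Real.exp_le_exp.mpr harg) hc0.le
      _ = c0 * ∏ q, Real.exp (lam * (x q)^2 / 2) := by
          rw [← Real.exp_sum]
          congr 1
          rw [← Finset.sum_div, ← Finset.mul_sum]
  -- measurability
  have hgm : Measurable fun x : Fin Qc → ℝ =>
      σ (∑ q, (τ q * (d:ℝ)^((η q + κ q)/2) / Real.sqrt S) * x q) ^ 2 := by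
    apply Measurable.pow_const
    exact hmeas.comp (Finset.measurable_sum _ fun q _ =>
      (measurable_pi_apply q).const_mul _)
  rw [MeasureTheory.integral_eq_lintegral_of_nonneg_ae
    (Filter.Eventually.of_forall fun x => sq_nonneg _) hgm.aestronglyMeasurable]
  apply ENNReal.toReal_le_of_le_ofReal (by positivity)
  have hgexp : ∀ q : Fin Qc, Measurable fun t : ℝ =>
      ENNReal.ofReal (Real.exp (lam * t^2 / 2)) := by intro q; fun_prop
  calc ∫⁻ x : Fin Qc → ℝ, ENNReal.ofReal
          (σ (∑ q, (τ q * (d:ℝ)^((η q + κ q)/2) / Real.sqrt S) * x q) ^ 2)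
          ∂(Measure.pi fun q => projMeasure ⌈(d:ℝ)^(η q)⌉₊)
      ≤ ∫⁻ x : Fin Qc → ℝ, ENNReal.ofReal c0
          * ∏ q, ENNReal.ofReal (Real.exp (lam * (x q)^2 / 2))
          ∂(Measure.pi fun q => projMeasure ⌈(d:ℝ)^(η q)⌉₊) := by
        apply lintegral_mono
        intro x
        calc ENNReal.ofReal (σ (∑ q, (τ q * (d:ℝ)^((η q + κ q)/2) / Real.sqrt S) * x q) ^ 2)
            ≤ ENNReal.ofReal (c0 * ∏ q, Real.exp (lam * (x q)^2 / 2)) :=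
              ENNReal.ofReal_le_ofReal (hptreal x)
          _ = ENNReal.ofReal c0 * ∏ q, ENNReal.ofReal (Real.exp (lam * (x q)^2 / 2)) := by
              rw [ENNReal.ofReal_mul hc0.le,
                ENNReal.ofReal_prod_of_nonneg (fun q _ => (Real.exp_pos _).le)]
    _ = ENNReal.ofReal c0 * ∏ q, ∫⁻ t, ENNReal.ofReal (Real.exp (lam * t^2 / 2))
          ∂projMeasure ⌈(d:ℝ)^(η q)⌉₊ := by
        have hfprod : Measurable fun x : Fin Qc → ℝ =>
            ∏ q, ENNReal.ofReal (Real.exp (lam * (x q)^2 / 2)) :=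
          Finset.measurable_prod _ fun q _ => (hgexp q).comp (measurable_pi_apply q)
        rw [lintegral_const_mul _ hfprod, lintegral_pi_prod _ _ hgexp]
    _ ≤ ENNReal.ofReal c0 * ∏ _q : Fin Qc, ENNReal.ofReal K := by
        gcongr with q
        exact lintegral_exp_projMeasure hlam0 (hn4 q) (hn6 q)
    _ = ENNReal.ofReal (c0 * K ^ Qc) := by
        rw [Finset.prod_const, Finset.card_univ, Fintype.card_fin,
          ENNReal.ofReal_mul hc0.le, ENNReal.ofReal_pow hK0]
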